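/- Suppose prices are multiplicative, p_{ij} = p_i q_j with p_i, q_j > 0. Then a set S ⊆ [m]×[n] can be captured exactly (i.e., there exist multipliers r, c with r_i c_j ≥ p_{ij} iff (i,j) ∈ S) only if S is a staircase: for any two columns j₁, j₂, the set of rows of S in column j₁ is a subset or a superset of the set of rows of S in column j₂. -/
import Mathlib


/-- With multiplicative prices p_{ij} = p_i q_j (p_i, q_j > 0), any set S that is
captured exactly by nonnegative multipliers must be a staircase: the row sets of
any two columns are comparable under inclusion. -/
theorem stmt_8 (m n : ℕ) (p : Fin m → ℝ) (q : Fin n → ℝ)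
    (hp : ∀ i, 0 < p i) (hq : ∀ j, 0 < q j)
    (S : Set (Fin m × Fin n)) (r : Fin m → ℝ) (c : Fin n → ℝ)
    (hr : ∀ i, 0 ≤ r i) (hc : ∀ j, 0 ≤ c j)
    (hcap : ∀ i j, (i, j) ∈ S ↔ r i * c j ≥ p i * q j) :
    ∀ j₁ j₂ : Fin n,
      {i | (i, j₁) ∈ S} ⊆ {i | (i, j₂) ∈ S} ∨ {i | (i, j₂) ∈ S} ⊆ {i | (i, j₁) ∈ S} := by
  intro j₁ j₂
  by_contra h
  push_neg at h
  obtain ⟨h1, h2⟩ := h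
  obtain ⟨i₁, h11, h12⟩ := Set.not_subset.mp h1
  obtain ⟨i₂, h22, h21⟩ := Set.not_subset.mp h2
  simp only [Set.mem_setOf_eq, hcap] at h11 h12 h22 h21
  push_neg at h12 h21
  have H1 : (0:ℝ) ≤ r i₁ * c j₁ := le_trans (mul_pos (hp i₁) (hq j₁)).le h11
  have H2 : (0:ℝ) ≤ r i₂ * c j₂ := le_trans (mul_pos (hp i₂) (hq j₂)).le h22
  nlinarith [mul_pos (hp i₁) (hq j₂), mul_pos (hp i₂) (hq j₁),
    mul_le_mul h11 h22 (mul_pos (hp i₂) (hq j₂)).le H1,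
    mul_lt_mul'' h21 h12 (mul_nonneg (hr i₂) (hc j₁)) (mul_nonneg (hr i₁) (hc j₂))]
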